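/- Let (A,[.,.,.]) be a 3-Lie algebra with basis (e_i)_{1≤i≤d}, and suppose there is an index i₀ such that [e_j, e_k, e_l] = 0 whenever i₀ ∉ {j,k,l}. Define a bilinear skew-symmetric map by [e_j,e_k] := [e_{i₀}, e_j, e_k] for j,k ≠ i₀ and [e_{i₀}, e_j] := 0, and let τ be the linear form picking the e_{i₀}-coordinate. Assume moreover that τ([e_{i₀},e_j,e_k]) = 0 for all j,k. Then [.,.] satisfies the Jacobi identity and the 3-Lie bracket induced from ([.,.], τ) coincides with the original bracket [.,.,.]. -/

import Mathlib

/-- Auxiliary: the expression `τ x • g y z + τ y • g z x + τ z • g x y`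
is trilinear, packaged as a bundled linear map. -/
theorem existsT17 (K A : Type*) [Field K] [AddCommGroup A] [Module K A]
    (τ : A →ₗ[K] K) (g : A →ₗ[K] A →ₗ[K] A) :
    ∃ T : A →ₗ[K] A →ₗ[K] A →ₗ[K] A, ∀ x y z : A,
      T x y z = τ x • g y z + τ y • g z x + τ z • g x y := by
  have h1 : ∀ (m₁ m₂ n : A),
      (fun x y => τ x • g y + τ y • g.flip x + τ.smulRight (g x y)) (m₁ + m₂) n
        = (fun x y => τ x • g y + τ y • g.flip x + τ.smulRight (g x y)) m₁ n
          + (fun x y => τ x • g y + τ y • g.flip x + τ.smulRight (g x y)) m₂ n := by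
    intros; ext; simp [add_smul, smul_add]; abel
  have h2 : ∀ (c : K) (m n : A),
      (fun x y => τ x • g y + τ y • g.flip x + τ.smulRight (g x y)) (c • m) n
        = c • (fun x y => τ x • g y + τ y • g.flip x + τ.smulRight (g x y)) m n := by
    intros; ext; simp [smul_add, smul_smul, mul_comm]
  have h3 : ∀ (m n₁ n₂ : A),
      (fun x y => τ x • g y + τ y • g.flip x + τ.smulRight (g x y)) m (n₁ + n₂)
        = (fun x y => τ x • g y + τ y • g.flip x + τ.smulRight (g x y)) m n₁
          + (fun x y => τ x • g y + τ y • g.flip x + τ.smulRight (g x y)) m n₂ := by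
    intros; ext; simp [add_smul, smul_add]; abel
  have h4 : ∀ (c : K) (m n : A),
      (fun x y => τ x • g y + τ y • g.flip x + τ.smulRight (g x y)) m (c • n)
        = c • (fun x y => τ x • g y + τ y • g.flip x + τ.smulRight (g x y)) m n := by
    intros; ext; simp [smul_add, smul_smul, mul_comm]
  refine ⟨LinearMap.mk₂ K (fun x y => τ x • g y + τ y • g.flip x + τ.smulRight (g x y)) h1 h2 h3 h4, fun x y z => by
    simp [LinearMap.mk₂_apply]⟩

/-- If a 3-Lie algebra has a basis `(e_i)` and an index `i₀` such that all
brackets of basis vectors not involving `e_{i₀}` vanish, then the binary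
bracket `[e_j,e_k] := [e_{i₀},e_j,e_k]` (with `[e_{i₀},·] = 0`), together with
the coordinate form `τ = coord_{i₀}` (assuming `τ` vanishes on the brackets),
satisfies the Jacobi identity and induces back the original ternary bracket. -/
theorem stmt17 (K A : Type*) [Field K] [CharZero K] [AddCommGroup A] [Module K A]
    (d : ℕ) (e : Module.Basis (Fin d) K A) (i₀ : Fin d)
    (f : A →ₗ[K] A →ₗ[K] A →ₗ[K] A)
    (hskew12 : ∀ x y z : A, f x y z = - f y x z)
    (hskew23 : ∀ x y z : A, f x y z = - f x z y)
    (hFI : ∀ x₁ x₂ y₁ y₂ y₃ : A,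
      f x₁ x₂ (f y₁ y₂ y₃)
        = f (f x₁ x₂ y₁) y₂ y₃ + f y₁ (f x₁ x₂ y₂) y₃ + f y₁ y₂ (f x₁ x₂ y₃))
    (hzero : ∀ j k l : Fin d, j ≠ i₀ → k ≠ i₀ → l ≠ i₀ → f (e j) (e k) (e l) = 0)
    (b : A →ₗ[K] A →ₗ[K] A)
    (hbskew : ∀ x y : A, b x y = - b y x)
    (hb : ∀ j k : Fin d, j ≠ i₀ → k ≠ i₀ → b (e j) (e k) = f (e i₀) (e j) (e k))
    (hb0 : ∀ j : Fin d, b (e i₀) (e j) = 0)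
    (hτf : ∀ j k : Fin d, e.coord i₀ (f (e i₀) (e j) (e k)) = 0) :
    (∀ x y z : A, b x (b y z) = b (b x y) z + b y (b x z)) ∧
    (∀ x y z : A,
      e.coord i₀ x • b y z + e.coord i₀ y • b z x + e.coord i₀ z • b x y
        = f x y z) := by
  -- no 2-torsion
  have hne : ∀ a : A, a = -a → a = 0 := by
    intro a h
    have h2 : (2 : K) • a = 0 := by
      rw [two_smul]
      nth_rewrite 2 [h]
      exact add_neg_cancel a
    rcases smul_eq_zero.mp h2 with h' | h'
    · exact absurd h' two_ne_zero
    · exact h'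
  have f11 : ∀ x y : A, f x x y = 0 := fun x y => hne _ (hskew12 x x y)
  have f23 : ∀ x y : A, f x y y = 0 := fun x y => hne _ (hskew23 x y y)
  have f13 : ∀ x y : A, f x y x = 0 := by
    intro x y; rw [hskew12, f23, neg_zero]
  have fcyc : ∀ x y z : A, f x y z = f z x y := by
    intro x y z
    rw [hskew12, hskew23, neg_neg, hskew12 y z x, hskew23 z y x, neg_neg]
  -- b coincides with f (e i₀)
  have hbf : b = f (e i₀) := by
    refine e.ext fun j => e.ext fun k => ?_
    rcases eq_or_ne j i₀ with rfl | hj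
    · rw [hb0, f11]
    · rcases eq_or_ne k i₀ with rfl | hk
      · rw [hbskew, hb0, neg_zero, f13]
      · exact hb j k hj hk
  have hτ : ∀ j : Fin d, e.coord i₀ (e j) = if j = i₀ then 1 else 0 := by
    intro j; simp [Module.Basis.coord_apply, Finsupp.single_apply]
  constructor
  · intro x y z
    rw [hbf]
    rw [hFI (e i₀) x (e i₀) y z, f13, map_zero]
    simp
  · intro x y z
    obtain ⟨T, hT⟩ := existsT17 K A (e.coord i₀) (f (e i₀))
    have hTf : T = f := by
      refine e.ext fun j => e.ext fun k => e.ext fun l => ?_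
      rw [hT]
      rcases eq_or_ne j i₀ with rfl | hj
      · simp [hτ, f11, f13]
      · rcases eq_or_ne k i₀ with rfl | hk
        · simp only [hτ, hj, if_neg, if_pos, ite_true, ite_false, if_false,
            zero_smul, one_smul, f13, f11, smul_zero, zero_add, add_zero]
          exact fcyc _ _ _
        · rcases eq_or_ne l i₀ with rfl | hl
          · simp only [hτ, hj, hk, if_neg, if_pos, ite_true, ite_false, if_false,
              zero_smul, one_smul, f13, f11, smul_zero, zero_add, add_zero]
            exact (fcyc _ _ _).symm
          · simp [hτ, hj, hk, hl, hzero j k l hj hk hl]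
    rw [hbf, ← hT, hTf]
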